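/- Let L > 0 and define, for t > 0, P_t^{refl}(x, y) = −(1/(4πt)) ( exp(−(√3 x − y)²/(4t)) + exp(−y²/t) + exp(−(√3 x + y)²/(4t)) ). Then lim_{t→0⁺} √(π t) · 3 [ ∫₀^{L/4} ∫₀^{√3 x} P_t^{refl}(x, y) dy dx + ∫_{L/4}^{L/2} ∫₀^{(L−x)/√3} P_t^{refl}(x, y) dy dx ] = −(3L)/8. That is, the contribution of the three reflection elements R_{a₁}, R_{a₂}, R_{a₁}·R_{a₂}·R_{a₁} of Dih₆ to the short-time partition function of the equilateral triangle of side length L behaves like −|∂Ω|/(8√(πt)) with |∂Ω| = 3L. -/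

import Mathlib

open Real Filter MeasureTheory


private lemma expdecayAux (d : ℝ) (hd : 0 < d) :
    Tendsto (fun t : ℝ => (Real.sqrt t)⁻¹ * Real.exp (-d / t))
      (nhdsWithin 0 (Set.Ioi 0)) (nhds 0) := by
  apply squeeze_zero' (g := fun t : ℝ => Real.sqrt t / d)
  · filter_upwards with t; positivity
  · filter_upwards [self_mem_nhdsWithin] with t ht
    have ht' : (0:ℝ) < t := ht
    have hst : (0:ℝ) < Real.sqrt t := Real.sqrt_pos.mpr ht'
    have h1 : Real.exp (-d/t) ≤ t / d := by
      have h2 : d / t ≤ Real.exp (d/t) := by linarith [Real.add_one_le_exp (d/t)]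
      calc Real.exp (-d/t) = (Real.exp (d/t))⁻¹ := by rw [← Real.exp_neg]; ring_nf
        _ ≤ (d/t)⁻¹ := inv_anti₀ (div_pos hd ht') h2
        _ = t / d := by rw [inv_div]
    calc (Real.sqrt t)⁻¹ * Real.exp (-d/t) ≤ (Real.sqrt t)⁻¹ * (t/d) := by gcongr
      _ = Real.sqrt t / d := by
          rw [← Real.mul_self_sqrt ht'.le]; field_simp; rw [Real.sqrt_sq hst.le]
  · have := (Real.continuous_sqrt.tendsto' 0 0 (by simp)).div_const d
    simpa using this.mono_left nhdsWithin_le_nhds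

private lemma vanishAux (b d : ℝ) (hb : 0 ≤ b) (hd : 0 < d) (g : ℝ → ℝ → ℝ)
    (h0 : ∀ t y, 0 ≤ g t y)
    (hint : ∀ t ∈ Set.Ioi (0:ℝ), IntervalIntegrable (g t) volume 0 b)
    (hle : ∀ t ∈ Set.Ioi (0:ℝ), ∀ y ∈ Set.Icc (0:ℝ) b, g t y ≤ Real.exp (-d / t)) :
    Tendsto (fun t : ℝ => (Real.sqrt t)⁻¹ * ∫ y in (0:ℝ)..b, g t y)
      (nhdsWithin 0 (Set.Ioi 0)) (nhds 0) := by
  apply squeeze_zero' (g := fun t : ℝ => (Real.sqrt t)⁻¹ * (b * Real.exp (-d / t)))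
  · filter_upwards [self_mem_nhdsWithin] with t ht
    exact mul_nonneg (by positivity) (intervalIntegral.integral_nonneg hb fun y _ => h0 t y)
  · filter_upwards [self_mem_nhdsWithin] with t ht
    have h1 : (∫ y in (0:ℝ)..b, g t y) ≤ ∫ _y in (0:ℝ)..b, Real.exp (-d/t) :=
      intervalIntegral.integral_mono_on hb (hint t ht) intervalIntegrable_const (hle t ht)
    have h2 : (∫ _y in (0:ℝ)..b, Real.exp (-d/t)) = b * Real.exp (-d/t) := by
      rw [intervalIntegral.integral_const]; simp [smul_eq_mul]
    rw [h2] at h1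
    exact mul_le_mul_of_nonneg_left h1 (by positivity)
  · have := (expdecayAux d hd).const_mul b
    simp only [mul_zero] at this
    apply this.congr
    intro t; ring

private lemma halfgaussAux (c a : ℝ) (hc : 0 < c) (ha : 0 < a) :
    Tendsto (fun t : ℝ => (Real.sqrt t)⁻¹ * ∫ y in (0:ℝ)..a, Real.exp (-y ^ 2 / (c * t)))
      (nhdsWithin 0 (Set.Ioi 0)) (nhds (Real.sqrt (Real.pi * c) / 2)) := by
  have hM : Tendsto (fun t : ℝ => a / Real.sqrt (c * t)) (nhdsWithin 0 (Set.Ioi 0)) atTop := by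
    have h1 : Tendsto (fun t : ℝ => Real.sqrt (c * t)) (nhdsWithin 0 (Set.Ioi 0))
        (nhdsWithin 0 (Set.Ioi 0)) := by
      rw [tendsto_nhdsWithin_iff]
      constructor
      · have hco : Continuous fun t : ℝ => Real.sqrt (c*t) :=
          Real.continuous_sqrt.comp (continuous_const.mul continuous_id)
        simpa using (hco.tendsto' 0 0 (by simp)).mono_left nhdsWithin_le_nhds
      · filter_upwards [self_mem_nhdsWithin] with t ht
        exact Real.sqrt_pos.mpr (mul_pos hc ht)
    have h2 : Tendsto (fun t : ℝ => (Real.sqrt (c*t))⁻¹) (nhdsWithin 0 (Set.Ioi 0)) atTop :=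
      tendsto_inv_nhdsGT_zero.comp h1
    simpa [div_eq_mul_inv] using h2.const_mul_atTop ha
  have hI : Tendsto (fun M : ℝ => ∫ v in (0:ℝ)..M, Real.exp (-v^2)) atTop
      (nhds (Real.sqrt Real.pi / 2)) := by
    have h1 : IntegrableOn (fun v : ℝ => Real.exp (-v^2)) (Set.Ioi 0) := by
      have := (integrable_exp_neg_mul_sq one_pos).integrableOn (s := Set.Ioi (0:ℝ))
      simpa using this
    have h2 := MeasureTheory.intervalIntegral_tendsto_integral_Ioi 0 h1 tendsto_id
    have h3 : ∫ v in Set.Ioi (0:ℝ), Real.exp (-v^2) = Real.sqrt Real.pi / 2 := by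
      have := integral_gaussian_Ioi 1; simpa using this
    rw [h3] at h2; exact h2
  have hmain : Tendsto
      (fun t : ℝ => Real.sqrt c * ∫ v in (0:ℝ)..(a / Real.sqrt (c*t)), Real.exp (-v^2))
      (nhdsWithin 0 (Set.Ioi 0)) (nhds (Real.sqrt c * (Real.sqrt Real.pi / 2))) :=
    (hI.comp hM).const_mul (Real.sqrt c)
  have heq : (fun t : ℝ => Real.sqrt c * ∫ v in (0:ℝ)..(a / Real.sqrt (c*t)), Real.exp (-v^2))
      =ᶠ[nhdsWithin 0 (Set.Ioi 0)]
      (fun t : ℝ => (Real.sqrt t)⁻¹ * ∫ y in (0:ℝ)..a, Real.exp (-y ^ 2 / (c * t))) := by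
    filter_upwards [self_mem_nhdsWithin] with t ht
    have ht' : (0:ℝ) < t := ht
    have hs : (0:ℝ) < Real.sqrt (c*t) := Real.sqrt_pos.mpr (mul_pos hc ht')
    have hs2 : (Real.sqrt (c*t))^2 = c*t := Real.sq_sqrt (mul_pos hc ht').le
    have harg : ∀ y : ℝ, -y^2/(c*t) = -((Real.sqrt (c*t))⁻¹*y)^2 := by
      intro y
      rw [mul_pow, inv_pow, hs2]
      field_simp
    have hsub : (∫ y in (0:ℝ)..a, Real.exp (-y^2/(c*t)))
        = Real.sqrt (c*t) * ∫ v in (0:ℝ)..(a/Real.sqrt (c*t)), Real.exp (-v^2) := by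
      have e1 : (∫ y in (0:ℝ)..a, Real.exp (-y^2/(c*t)))
          = ∫ y in (0:ℝ)..a, Real.exp (-((Real.sqrt (c*t))⁻¹*y)^2) := by
        apply intervalIntegral.integral_congr
        intro y _
        simp only []
        rw [harg y]
      rw [e1, intervalIntegral.integral_comp_mul_left (fun v => Real.exp (-v^2))
        (inv_ne_zero hs.ne')]
      simp [smul_eq_mul, inv_mul_eq_div]
    rw [hsub]
    have hct : Real.sqrt (c*t) = Real.sqrt c * Real.sqrt t := Real.sqrt_mul hc.le t
    have hstpos : (0:ℝ) < Real.sqrt t := Real.sqrt_pos.mpr ht'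
    rw [hct]
    field_simp
  have hval : Real.sqrt (Real.pi * c) / 2 = Real.sqrt c * (Real.sqrt Real.pi / 2) := by
    rw [Real.sqrt_mul Real.pi_pos.le]; ring
  rw [hval]
  exact hmain.congr' heq

private lemma gaussLeAux (k m b : ℝ) (hk : 0 < k) (hb : 0 ≤ b) :
    ∫ y in (0:ℝ)..b, Real.exp (-(y - m) ^ 2 / k) ≤ Real.sqrt (Real.pi * k) := by
  have harg : ∀ y : ℝ, Real.exp (-k⁻¹ * (y - m)^2) = Real.exp (-(y - m)^2 / k) := by
    intro y; congr 1; field_simp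
  have hint : Integrable (fun y : ℝ => Real.exp (-(y - m)^2 / k)) := by
    have h1 : Integrable (fun y : ℝ => Real.exp (-k⁻¹ * y^2)) :=
      integrable_exp_neg_mul_sq (inv_pos.mpr hk)
    exact ((h1.comp_sub_right m).congr (Filter.Eventually.of_forall fun y => harg y))
  rw [intervalIntegral.integral_of_le hb]
  calc (∫ y in Set.Ioc (0:ℝ) b, Real.exp (-(y - m)^2 / k))
      ≤ ∫ y : ℝ, Real.exp (-(y - m)^2 / k) :=
        setIntegral_le_integral hint (Filter.Eventually.of_forall fun y => (Real.exp_pos _).le)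
    _ = ∫ y : ℝ, Real.exp (-k⁻¹ * (y - m)^2) := by
        congr 1; funext y; rw [harg y]
    _ = ∫ y : ℝ, Real.exp (-k⁻¹ * y^2) :=
        integral_sub_right_eq_self (fun u => Real.exp (-k⁻¹ * u^2)) m
    _ = Real.sqrt (Real.pi / k⁻¹) := integral_gaussian k⁻¹
    _ = Real.sqrt (Real.pi * k) := by rw [div_inv_eq_mul]

private lemma prefactorAux (t S : ℝ) (ht : 0 < t) :
    Real.sqrt (Real.pi * t) * 3 * (-(1 / (4 * Real.pi * t)) * S) =
      -(3 / (4 * Real.sqrt Real.pi)) * ((Real.sqrt t)⁻¹ * S) := by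
  have hp : Real.sqrt Real.pi ^ 2 = Real.pi := Real.sq_sqrt Real.pi_pos.le
  have hs : Real.sqrt t ^ 2 = t := Real.sq_sqrt ht.le
  have hp0 : Real.sqrt Real.pi ≠ 0 := (Real.sqrt_pos.mpr Real.pi_pos).ne'
  have hs0 : Real.sqrt t ≠ 0 := (Real.sqrt_pos.mpr ht).ne'
  rw [Real.sqrt_mul Real.pi_pos.le]
  set p := Real.sqrt Real.pi with hpd
  set s := Real.sqrt t with hsd
  rw [← hp, ← hs]
  field_simp

private lemma prefactorBoundAux (t S : ℝ) (ht : 0 < t) (hS0 : 0 ≤ S)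
    (hS : S ≤ 5 * Real.sqrt (Real.pi * t)) :
    ‖Real.sqrt (Real.pi * t) * 3 * (-(1 / (4 * Real.pi * t)) * S)‖ ≤ 9 / 2 := by
  have hπt : 0 < Real.pi * t := mul_pos Real.pi_pos ht
  have hsq : Real.sqrt (Real.pi*t) * Real.sqrt (Real.pi*t) = Real.pi * t :=
    Real.mul_self_sqrt hπt.le
  have hsnn : 0 ≤ Real.sqrt (Real.pi*t) := Real.sqrt_nonneg _
  have heq : Real.sqrt (Real.pi*t) * 3 * (-(1/(4*Real.pi*t))*S)
      = -(3 * Real.sqrt (Real.pi*t) * S / (4*(Real.pi*t))) := by ring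
  rw [heq, Real.norm_eq_abs, abs_neg, abs_of_nonneg (by positivity)]
  have h1 : 3 * Real.sqrt (Real.pi*t) * S ≤ 3 * Real.sqrt (Real.pi*t) * (5 * Real.sqrt (Real.pi*t)) := by
    gcongr
  calc 3 * Real.sqrt (Real.pi*t) * S / (4*(Real.pi*t))
      ≤ 3 * Real.sqrt (Real.pi*t) * (5 * Real.sqrt (Real.pi*t)) / (4*(Real.pi*t)) := by gcongr
    _ = 15 * (Real.pi*t) / (4*(Real.pi*t)) := by rw [show 3 * Real.sqrt (Real.pi*t) * (5 * Real.sqrt (Real.pi*t)) = 15 * (Real.sqrt (Real.pi*t) * Real.sqrt (Real.pi*t)) by ring, hsq]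
    _ = 15 / 4 := by field_simp
    _ ≤ 9 / 2 := by norm_num

private lemma splitAux (P : ℝ → ℝ → ℝ → ℝ)
    (hP : ∀ t x y, P t x y =
      -(1 / (4 * Real.pi * t)) *
        (Real.exp (-(Real.sqrt 3 * x - y) ^ 2 / (4 * t)) + Real.exp (-y ^ 2 / t) +
          Real.exp (-(Real.sqrt 3 * x + y) ^ 2 / (4 * t))))
    (t x b : ℝ) :
    (∫ y in (0:ℝ)..b, P t x y) = -(1 / (4 * Real.pi * t)) *
      ((∫ y in (0:ℝ)..b, Real.exp (-(Real.sqrt 3 * x - y) ^ 2 / (4 * t)))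
        + (∫ y in (0:ℝ)..b, Real.exp (-y ^ 2 / t))
        + (∫ y in (0:ℝ)..b, Real.exp (-(Real.sqrt 3 * x + y) ^ 2 / (4 * t)))) := by
  have i1 : IntervalIntegrable (fun y : ℝ => Real.exp (-(Real.sqrt 3 * x - y) ^ 2 / (4 * t)))
      volume 0 b := (Continuous.intervalIntegrable (by fun_prop) _ _)
  have i2 : IntervalIntegrable (fun y : ℝ => Real.exp (-y ^ 2 / t)) volume 0 b :=
    (Continuous.intervalIntegrable (by fun_prop) _ _)
  have i3 : IntervalIntegrable (fun y : ℝ => Real.exp (-(Real.sqrt 3 * x + y) ^ 2 / (4 * t)))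
      volume 0 b := (Continuous.intervalIntegrable (by fun_prop) _ _)
  simp only [hP]
  rw [intervalIntegral.integral_const_mul]
  congr 1
  rw [intervalIntegral.integral_add (i1.add i2) i3, intervalIntegral.integral_add i1 i2]

private lemma limitOneAux (P : ℝ → ℝ → ℝ → ℝ)
    (hP : ∀ t x y, P t x y =
      -(1 / (4 * Real.pi * t)) *
        (Real.exp (-(Real.sqrt 3 * x - y) ^ 2 / (4 * t)) + Real.exp (-y ^ 2 / t) +
          Real.exp (-(Real.sqrt 3 * x + y) ^ 2 / (4 * t))))
    (x : ℝ) (hx : 0 < x) :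
    Tendsto (fun t : ℝ =>
        Real.sqrt (Real.pi * t) * 3 * ∫ y in (0:ℝ)..(Real.sqrt 3 * x), P t x y)
      (nhdsWithin 0 (Set.Ioi 0)) (nhds (-(9/8))) := by
  have h3pos : (0:ℝ) < Real.sqrt 3 := Real.sqrt_pos.mpr (by norm_num)
  have hb : (0:ℝ) < Real.sqrt 3 * x := mul_pos h3pos hx
  have hp0 : Real.sqrt Real.pi ≠ 0 := (Real.sqrt_pos.mpr Real.pi_pos).ne'
  -- term A
  have hA : Tendsto (fun t : ℝ => (Real.sqrt t)⁻¹ *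
      ∫ y in (0:ℝ)..(Real.sqrt 3 * x), Real.exp (-(Real.sqrt 3 * x - y) ^ 2 / (4 * t)))
      (nhdsWithin 0 (Set.Ioi 0)) (nhds (Real.sqrt (Real.pi * 4) / 2)) := by
    have hrw : ∀ t : ℝ, (∫ y in (0:ℝ)..(Real.sqrt 3 * x),
        Real.exp (-(Real.sqrt 3 * x - y) ^ 2 / (4 * t)))
        = ∫ u in (0:ℝ)..(Real.sqrt 3 * x), Real.exp (-u ^ 2 / (4 * t)) := by
      intro t
      have := intervalIntegral.integral_comp_sub_left (a := (0:ℝ)) (b := Real.sqrt 3 * x)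
        (fun u => Real.exp (-u ^ 2 / (4 * t))) (Real.sqrt 3 * x)
      simpa using this
    have h4 := halfgaussAux 4 (Real.sqrt 3 * x) (by norm_num) hb
    exact h4.congr (fun t => by rw [hrw t])
  -- term B
  have hB : Tendsto (fun t : ℝ => (Real.sqrt t)⁻¹ *
      ∫ y in (0:ℝ)..(Real.sqrt 3 * x), Real.exp (-y ^ 2 / t))
      (nhdsWithin 0 (Set.Ioi 0)) (nhds (Real.sqrt Real.pi / 2)) := by
    have := halfgaussAux 1 (Real.sqrt 3 * x) one_pos hb
    simp only [one_mul, mul_one] at this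
    exact this
  -- term C
  have hC : Tendsto (fun t : ℝ => (Real.sqrt t)⁻¹ *
      ∫ y in (0:ℝ)..(Real.sqrt 3 * x), Real.exp (-(Real.sqrt 3 * x + y) ^ 2 / (4 * t)))
      (nhdsWithin 0 (Set.Ioi 0)) (nhds 0) := by
    apply vanishAux (Real.sqrt 3 * x) (3 * x ^ 2 / 4) hb.le (by positivity)
    · intro t y; exact (Real.exp_pos _).le
    · intro t _; exact Continuous.intervalIntegrable (by fun_prop) _ _
    · intro t ht y hy
      have ht' : (0:ℝ) < t := ht
      have h3s : Real.sqrt 3 ^ 2 = 3 := Real.sq_sqrt (by norm_num)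
      have hkey : 3 * x ^ 2 ≤ (Real.sqrt 3 * x + y) ^ 2 := by
        nlinarith [Real.sqrt_nonneg 3, hy.1,
          mul_nonneg (mul_nonneg (Real.sqrt_nonneg 3) hx.le) hy.1]
      apply Real.exp_le_exp.mpr
      rw [show -(3 * x ^ 2 / 4) / t = -(3 * x ^ 2 / (4 * t)) by ring,
        show -(Real.sqrt 3 * x + y) ^ 2 / (4 * t)
          = -((Real.sqrt 3 * x + y) ^ 2 / (4 * t)) by ring, neg_le_neg_iff]
      gcongr
  have hsum := ((hA.add hB).add hC).const_mul (-(3 / (4 * Real.sqrt Real.pi)))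
  have hval : -(3 / (4 * Real.sqrt Real.pi)) *
      ((Real.sqrt (Real.pi * 4) / 2 + Real.sqrt Real.pi / 2) + 0) = -(9/8) := by
    have h4 : Real.sqrt ((4:ℝ)) = 2 := by
      rw [show (4:ℝ) = 2 ^ 2 by norm_num, Real.sqrt_sq (by norm_num : (0:ℝ) ≤ 2)]
    rw [Real.sqrt_mul Real.pi_pos.le, h4]
    field_simp
    ring
  rw [hval] at hsum
  apply hsum.congr'
  filter_upwards [self_mem_nhdsWithin] with t ht
  rw [splitAux P hP t x _, prefactorAux t _ ht]
  ring

private lemma limitTwoAux (P : ℝ → ℝ → ℝ → ℝ)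
    (hP : ∀ t x y, P t x y =
      -(1 / (4 * Real.pi * t)) *
        (Real.exp (-(Real.sqrt 3 * x - y) ^ 2 / (4 * t)) + Real.exp (-y ^ 2 / t) +
          Real.exp (-(Real.sqrt 3 * x + y) ^ 2 / (4 * t))))
    (L x : ℝ) (hL : 0 < L) (hx1 : L / 4 < x) (hx2 : x ≤ L / 2) :
    Tendsto (fun t : ℝ =>
        Real.sqrt (Real.pi * t) * 3 * ∫ y in (0:ℝ)..((L - x) / Real.sqrt 3), P t x y)
      (nhdsWithin 0 (Set.Ioi 0)) (nhds (-(3/8))) := by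
  have h3pos : (0:ℝ) < Real.sqrt 3 := Real.sqrt_pos.mpr (by norm_num)
  have h33 : Real.sqrt 3 * Real.sqrt 3 = 3 := Real.mul_self_sqrt (by norm_num)
  have hx0 : 0 < x := by linarith
  have hb : (0:ℝ) < (L - x) / Real.sqrt 3 := div_pos (by linarith) h3pos
  have hp0 : Real.sqrt Real.pi ≠ 0 := (Real.sqrt_pos.mpr Real.pi_pos).ne'
  have he : (0:ℝ) < Real.sqrt 3 * x - (L - x) / Real.sqrt 3 := by
    rw [sub_pos, div_lt_iff₀ h3pos]
    nlinarith
  -- term A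
  have hA : Tendsto (fun t : ℝ => (Real.sqrt t)⁻¹ *
      ∫ y in (0:ℝ)..((L - x) / Real.sqrt 3),
        Real.exp (-(Real.sqrt 3 * x - y) ^ 2 / (4 * t)))
      (nhdsWithin 0 (Set.Ioi 0)) (nhds 0) := by
    apply vanishAux ((L - x) / Real.sqrt 3)
      ((Real.sqrt 3 * x - (L - x) / Real.sqrt 3) ^ 2 / 4) hb.le
      (div_pos (pow_pos he 2) (by norm_num))
    · intro t y; exact (Real.exp_pos _).le
    · intro t _; exact Continuous.intervalIntegrable (by fun_prop) _ _
    · intro t ht y hy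
      have ht' : (0:ℝ) < t := ht
      have h1 : Real.sqrt 3 * x - (L - x) / Real.sqrt 3 ≤ Real.sqrt 3 * x - y := by
        linarith [hy.2]
      have hkey : (Real.sqrt 3 * x - (L - x) / Real.sqrt 3) ^ 2
          ≤ (Real.sqrt 3 * x - y) ^ 2 := by nlinarith
      apply Real.exp_le_exp.mpr
      rw [show -((Real.sqrt 3 * x - (L - x) / Real.sqrt 3) ^ 2 / 4) / t
          = -((Real.sqrt 3 * x - (L - x) / Real.sqrt 3) ^ 2 / (4 * t)) by ring,
        show -(Real.sqrt 3 * x - y) ^ 2 / (4 * t)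
          = -((Real.sqrt 3 * x - y) ^ 2 / (4 * t)) by ring, neg_le_neg_iff]
      gcongr
  -- term B
  have hB : Tendsto (fun t : ℝ => (Real.sqrt t)⁻¹ *
      ∫ y in (0:ℝ)..((L - x) / Real.sqrt 3), Real.exp (-y ^ 2 / t))
      (nhdsWithin 0 (Set.Ioi 0)) (nhds (Real.sqrt Real.pi / 2)) := by
    have := halfgaussAux 1 ((L - x) / Real.sqrt 3) one_pos hb
    simp only [one_mul, mul_one] at this
    exact this
  -- term C
  have hC : Tendsto (fun t : ℝ => (Real.sqrt t)⁻¹ *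
      ∫ y in (0:ℝ)..((L - x) / Real.sqrt 3),
        Real.exp (-(Real.sqrt 3 * x + y) ^ 2 / (4 * t)))
      (nhdsWithin 0 (Set.Ioi 0)) (nhds 0) := by
    apply vanishAux ((L - x) / Real.sqrt 3) (3 * x ^ 2 / 4) hb.le (by positivity)
    · intro t y; exact (Real.exp_pos _).le
    · intro t _; exact Continuous.intervalIntegrable (by fun_prop) _ _
    · intro t ht y hy
      have ht' : (0:ℝ) < t := ht
      have h3s : Real.sqrt 3 ^ 2 = 3 := Real.sq_sqrt (by norm_num)
      have hkey : 3 * x ^ 2 ≤ (Real.sqrt 3 * x + y) ^ 2 := by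
        nlinarith [Real.sqrt_nonneg 3, hy.1,
          mul_nonneg (mul_nonneg (Real.sqrt_nonneg 3) hx0.le) hy.1]
      apply Real.exp_le_exp.mpr
      rw [show -(3 * x ^ 2 / 4) / t = -(3 * x ^ 2 / (4 * t)) by ring,
        show -(Real.sqrt 3 * x + y) ^ 2 / (4 * t)
          = -((Real.sqrt 3 * x + y) ^ 2 / (4 * t)) by ring, neg_le_neg_iff]
      gcongr
  have hsum := ((hA.add hB).add hC).const_mul (-(3 / (4 * Real.sqrt Real.pi)))
  have hval : -(3 / (4 * Real.sqrt Real.pi)) *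
      ((0 + Real.sqrt Real.pi / 2) + 0) = -(3/8) := by
    field_simp
    ring
  rw [hval] at hsum
  apply hsum.congr'
  filter_upwards [self_mem_nhdsWithin] with t ht
  rw [splitAux P hP t x _, prefactorAux t _ ht]
  ring

private lemma boundAux (P : ℝ → ℝ → ℝ → ℝ)
    (hP : ∀ t x y, P t x y =
      -(1 / (4 * Real.pi * t)) *
        (Real.exp (-(Real.sqrt 3 * x - y) ^ 2 / (4 * t)) + Real.exp (-y ^ 2 / t) +
          Real.exp (-(Real.sqrt 3 * x + y) ^ 2 / (4 * t))))
    (t x b : ℝ) (ht : 0 < t) (hb : 0 ≤ b) :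
    ‖Real.sqrt (Real.pi * t) * 3 * ∫ y in (0:ℝ)..b, P t x y‖ ≤ 9 / 2 := by
  rw [splitAux P hP t x b]
  have h4t : Real.sqrt (Real.pi * (4 * t)) = 2 * Real.sqrt (Real.pi * t) := by
    rw [show Real.pi * (4 * t) = 2 ^ 2 * (Real.pi * t) by ring,
      Real.sqrt_mul (by positivity), Real.sqrt_sq (by norm_num : (0:ℝ) ≤ 2)]
  have hA : (∫ y in (0:ℝ)..b, Real.exp (-(Real.sqrt 3 * x - y) ^ 2 / (4 * t)))
      ≤ 2 * Real.sqrt (Real.pi * t) := by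
    have heq : (∫ y in (0:ℝ)..b, Real.exp (-(Real.sqrt 3 * x - y) ^ 2 / (4 * t)))
        = ∫ y in (0:ℝ)..b, Real.exp (-(y - Real.sqrt 3 * x) ^ 2 / (4 * t)) := by
      apply intervalIntegral.integral_congr
      intro y _
      simp only []
      rw [show -(Real.sqrt 3 * x - y) ^ 2 / (4 * t) = -(y - Real.sqrt 3 * x) ^ 2 / (4 * t) by ring]
    rw [heq, ← h4t]
    exact gaussLeAux (4 * t) (Real.sqrt 3 * x) b (by positivity) hb
  have hB : (∫ y in (0:ℝ)..b, Real.exp (-y ^ 2 / t)) ≤ Real.sqrt (Real.pi * t) := by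
    have heq : (∫ y in (0:ℝ)..b, Real.exp (-y ^ 2 / t))
        = ∫ y in (0:ℝ)..b, Real.exp (-(y - 0) ^ 2 / t) := by
      apply intervalIntegral.integral_congr
      intro y _
      simp only []
      rw [show -y ^ 2 / t = -(y - 0) ^ 2 / t by ring]
    rw [heq]
    exact gaussLeAux t 0 b ht hb
  have hC : (∫ y in (0:ℝ)..b, Real.exp (-(Real.sqrt 3 * x + y) ^ 2 / (4 * t)))
      ≤ 2 * Real.sqrt (Real.pi * t) := by
    have heq : (∫ y in (0:ℝ)..b, Real.exp (-(Real.sqrt 3 * x + y) ^ 2 / (4 * t)))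
        = ∫ y in (0:ℝ)..b, Real.exp (-(y - -(Real.sqrt 3 * x)) ^ 2 / (4 * t)) := by
      apply intervalIntegral.integral_congr
      intro y _
      simp only []
      rw [show -(Real.sqrt 3 * x + y) ^ 2 / (4 * t)
        = -(y - -(Real.sqrt 3 * x)) ^ 2 / (4 * t) by ring]
    rw [heq, ← h4t]
    exact gaussLeAux (4 * t) (-(Real.sqrt 3 * x)) b (by positivity) hb
  have hA0 : 0 ≤ ∫ y in (0:ℝ)..b, Real.exp (-(Real.sqrt 3 * x - y) ^ 2 / (4 * t)) :=
    intervalIntegral.integral_nonneg hb fun y _ => (Real.exp_pos _).le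
  have hB0 : 0 ≤ ∫ y in (0:ℝ)..b, Real.exp (-y ^ 2 / t) :=
    intervalIntegral.integral_nonneg hb fun y _ => (Real.exp_pos _).le
  have hC0 : 0 ≤ ∫ y in (0:ℝ)..b, Real.exp (-(Real.sqrt 3 * x + y) ^ 2 / (4 * t)) :=
    intervalIntegral.integral_nonneg hb fun y _ => (Real.exp_pos _).le
  exact prefactorBoundAux t _ ht (by linarith) (by linarith)


/-- The contribution of the three reflection elements of `Dih₆` to the short-time
partition function of the equilateral triangle of side `L`: with
`P_t^{refl}(x,y) = −(1/(4πt))(e^{−(√3 x − y)²/(4t)} + e^{−y²/t} + e^{−(√3 x + y)²/(4t)})`,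
`lim_{t→0⁺} √(πt) · 3 [∫₀^{L/4}∫₀^{√3 x} P_t^{refl} dy dx
  + ∫_{L/4}^{L/2}∫₀^{(L−x)/√3} P_t^{refl} dy dx] = −3L/8`,
i.e. the contribution behaves like `−|∂Ω|/(8√(πt))` with `|∂Ω| = 3L`. -/
theorem equilateral_reflection_contribution (L : ℝ) (hL : 0 < L)
    (P : ℝ → ℝ → ℝ → ℝ)
    (hP : ∀ t x y, P t x y =
      -(1 / (4 * Real.pi * t)) *
        (Real.exp (-(Real.sqrt 3 * x - y) ^ 2 / (4 * t)) + Real.exp (-y ^ 2 / t) +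
          Real.exp (-(Real.sqrt 3 * x + y) ^ 2 / (4 * t)))) :
    Tendsto
      (fun t : ℝ =>
        Real.sqrt (Real.pi * t) * (3 *
          ((∫ x in (0:ℝ)..(L / 4), ∫ y in (0:ℝ)..(Real.sqrt 3 * x), P t x y) +
            ∫ x in (L / 4)..(L / 2), ∫ y in (0:ℝ)..((L - x) / Real.sqrt 3), P t x y)))
      (nhdsWithin 0 (Set.Ioi 0)) (nhds (-(3 * L) / 8)) := by
  have hmeas : ∀ (t : ℝ) (u : ℝ → ℝ), Continuous u →
      AEStronglyMeasurable (fun x : ℝ => Real.sqrt (Real.pi * t) * 3 *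
        ∫ y in (0:ℝ)..(u x), P t x y) (volume.restrict (Set.uIoc 0 (L/4))) := by
    intro t u hu
    apply Continuous.aestronglyMeasurable
    apply Continuous.mul continuous_const
    have huncur : Continuous (Function.uncurry fun x y => P t x y) := by
      have he : (Function.uncurry fun x y => P t x y) = fun q : ℝ × ℝ =>
          -(1 / (4 * Real.pi * t)) *
            (Real.exp (-(Real.sqrt 3 * q.1 - q.2) ^ 2 / (4 * t)) + Real.exp (-q.2 ^ 2 / t) +
              Real.exp (-(Real.sqrt 3 * q.1 + q.2) ^ 2 / (4 * t))) := by
        funext q; exact hP t q.1 q.2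
      rw [he]; fun_prop
    exact intervalIntegral.continuous_parametric_intervalIntegral_of_continuous huncur hu
  -- region 1
  have key1 : Tendsto (fun t : ℝ => ∫ x in (0:ℝ)..(L/4),
      Real.sqrt (Real.pi * t) * 3 * ∫ y in (0:ℝ)..(Real.sqrt 3 * x), P t x y)
      (nhdsWithin 0 (Set.Ioi 0)) (nhds (∫ _x in (0:ℝ)..(L/4), (-(9/8) : ℝ))) := by
    refine intervalIntegral.tendsto_integral_filter_of_dominated_convergence
      (bound := fun _ => (9:ℝ)/2) ?_ ?_ ?_ ?_
    · filter_upwards [self_mem_nhdsWithin] with t _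
      exact (fun h => hmeas t _ h) (continuous_const.mul continuous_id)
    · filter_upwards [self_mem_nhdsWithin] with t ht
      refine Filter.Eventually.of_forall fun x hxI => ?_
      rw [Set.uIoc_of_le (by linarith : (0:ℝ) ≤ L/4)] at hxI
      exact boundAux P hP t x _ ht (mul_nonneg (Real.sqrt_nonneg 3) hxI.1.le)
    · exact intervalIntegrable_const
    · refine Filter.Eventually.of_forall fun x hxI => ?_
      rw [Set.uIoc_of_le (by linarith : (0:ℝ) ≤ L/4)] at hxI
      exact limitOneAux P hP x hxI.1
  -- region 2
  have key2 : Tendsto (fun t : ℝ => ∫ x in (L/4)..(L/2),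
      Real.sqrt (Real.pi * t) * 3 * ∫ y in (0:ℝ)..((L - x) / Real.sqrt 3), P t x y)
      (nhdsWithin 0 (Set.Ioi 0)) (nhds (∫ _x in (L/4)..(L/2), (-(3/8) : ℝ))) := by
    have h3pos : (0:ℝ) < Real.sqrt 3 := Real.sqrt_pos.mpr (by norm_num)
    refine intervalIntegral.tendsto_integral_filter_of_dominated_convergence
      (bound := fun _ => (9:ℝ)/2) ?_ ?_ ?_ ?_
    · filter_upwards [self_mem_nhdsWithin] with t _
      apply Continuous.aestronglyMeasurable
      apply Continuous.mul continuous_const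
      have huncur : Continuous (Function.uncurry fun x y => P t x y) := by
        have he : (Function.uncurry fun x y => P t x y) = fun q : ℝ × ℝ =>
            -(1 / (4 * Real.pi * t)) *
              (Real.exp (-(Real.sqrt 3 * q.1 - q.2) ^ 2 / (4 * t)) + Real.exp (-q.2 ^ 2 / t) +
                Real.exp (-(Real.sqrt 3 * q.1 + q.2) ^ 2 / (4 * t))) := by
          funext q; exact hP t q.1 q.2
        rw [he]; fun_prop
      exact intervalIntegral.continuous_parametric_intervalIntegral_of_continuous huncur
        (by fun_prop)
    · filter_upwards [self_mem_nhdsWithin] with t ht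
      refine Filter.Eventually.of_forall fun x hxI => ?_
      rw [Set.uIoc_of_le (by linarith : L/4 ≤ L/2)] at hxI
      have hxb : (0:ℝ) ≤ (L - x) / Real.sqrt 3 := by
        apply div_nonneg _ h3pos.le
        have := hxI.2
        linarith
      exact boundAux P hP t x _ ht hxb
    · exact intervalIntegrable_const
    · refine Filter.Eventually.of_forall fun x hxI => ?_
      rw [Set.uIoc_of_le (by linarith : L/4 ≤ L/2)] at hxI
      exact limitTwoAux P hP L x hL hxI.1 hxI.2
  have key := key1.add key2
  have hval : (∫ _x in (0:ℝ)..(L/4), (-(9/8) : ℝ)) + (∫ _x in (L/4)..(L/2), (-(3/8) : ℝ))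
      = -(3 * L) / 8 := by
    rw [intervalIntegral.integral_const, intervalIntegral.integral_const]
    simp only [smul_eq_mul]
    ring
  rw [hval] at key
  apply key.congr
  intro t
  rw [intervalIntegral.integral_const_mul, intervalIntegral.integral_const_mul]
  ring
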